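/- Let d ≥ 1, n ≥ 1, r > 0, and let F : ℤ^d → GL(n,ℂ) satisfy F(y) = I for all y ∉ B_r ∩ ℤ^d. Let ρ > 2r, let θ ∈ S^{d-1} \ Ω_ρ, and let x ∈ B_r ∩ ℤ^d. Then the oriented line γ_{x,θ} = {x + tθ : t ∈ ℝ} contains no lattice point of B_r ∩ ℤ^d other than x, and consequently S(F)(γ_{x,θ}) = F(x). -/

import Mathlib

noncomputable section

open Matrix

/-- Embedding of the lattice `ℤ^d` into Euclidean `ℝ^d`. -/
def emb {d : ℕ} (z : Fin d → ℤ) : EuclideanSpace ℝ (Fin d) := WithLp.toLp 2 (fun i => (z i : ℝ))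

/- Ordered product of `Φ` over `supp`: the factors are multiplied so that larger values
of `key` contribute factors further to the left (the value is `1` if no strictly
`key`-decreasing enumeration of `supp` by a list exists). -/
open Classical in
noncomputable def oprodBy {α G : Type*} [Monoid G] (Φ : α → G) (key : α → ℝ) (supp : Set α) : G :=
  if h : ∃ l : List α, l.Pairwise (fun a b => key b < key a) ∧ ∀ a, a ∈ l ↔ a ∈ supp
  then (h.choose.map Φ).prod else 1

/-- The discrete non-abelian X-ray transform of `F` along the oriented line through `x`
with direction `θ`: the ordered product of `F y` over lattice points `y` on the line,
the point furthest along the orientation contributing the leftmost factor. -/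
noncomputable def discS {d : ℕ} {G : Type*} [Monoid G] (F : (Fin d → ℤ) → G)
    (x θ : EuclideanSpace ℝ (Fin d)) : G :=
  oprodBy F (fun z => ∑ i, ((z i : ℝ) - x i) * θ i)
    {z | (∃ t : ℝ, emb z = x + t • θ) ∧ F z ≠ 1}

lemma emb_sub {d : ℕ} (z x : Fin d → ℤ) : emb (z - x) = emb z - emb x := by
  ext i
  simp [emb, PiLp.sub_apply]

lemma emb_neg {d : ℕ} (z : Fin d → ℤ) : emb (-z) = - emb z := by
  ext i
  simp [emb, PiLp.neg_apply]

lemma emb_inj {d : ℕ} : Function.Injective (emb (d := d)) := by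
  intro a b h
  funext i
  have h2 := congrArg (fun v : EuclideanSpace ℝ (Fin d) => v i) h
  simp [emb] at h2
  exact_mod_cast h2

lemma gcd_one_le {d : ℕ} (w : Fin d → ℤ) (hw : w ≠ 0) :
    1 ≤ ((Finset.univ.gcd fun i => (w i).natAbs : ℕ) : ℝ) := by
  have : Finset.univ.gcd (fun i => (w i).natAbs) ≠ 0 := by
    intro h
    apply hw
    funext i
    have := (Finset.gcd_eq_zero_iff.mp h) i (Finset.mem_univ i)
    simpa [Int.natAbs_eq_zero] using this
  exact_mod_cast Nat.one_le_iff_ne_zero.mpr this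

/-- if F = I outside B_r ∩ ℤ^d, ρ > 2r and the unit direction θ is not in
Ω_ρ (the directions of rationality degree at most ρ), then for any lattice point
x ∈ B_r the line through x with direction θ contains no other lattice point of B_r,
and the discrete non-abelian X-ray transform along it equals F x. -/
theorem stmt2 (d n : ℕ) (hd : 1 ≤ d) (hn : 1 ≤ n) (r ρ : ℝ) (hr : 0 < r) (hρ : 2 * r < ρ)
    (F : (Fin d → ℤ) → GL (Fin n) ℂ) (hF : ∀ y : Fin d → ℤ, ¬ ‖emb y‖ ≤ r → F y = 1)
    (θ : EuclideanSpace ℝ (Fin d)) (hθ : ‖θ‖ = 1)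
    (hθρ : ¬ ∃ z : Fin d → ℤ, z ≠ 0 ∧
      ‖emb z‖ / ((Finset.univ.gcd fun i => (z i).natAbs : ℕ) : ℝ) ≤ ρ ∧
      θ = ‖emb z‖⁻¹ • emb z)
    (x : Fin d → ℤ) (hx : ‖emb x‖ ≤ r) :
    (∀ z : Fin d → ℤ, ‖emb z‖ ≤ r → (∃ t : ℝ, emb z = emb x + t • θ) → z = x) ∧
    discS F (emb x) θ = F x := by
  have key : ∀ z : Fin d → ℤ, ‖emb z‖ ≤ r → (∃ t : ℝ, emb z = emb x + t • θ) → z = x := by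
    rintro z hz ⟨t, ht⟩
    by_contra hzx
    have hw0 : z - x ≠ 0 := sub_ne_zero.mpr hzx
    have hwe : emb (z - x) = t • θ := by
      rw [emb_sub, ht]; abel
    have ht0 : t ≠ 0 := by
      rintro rfl
      exact hzx (emb_inj (by rw [ht, zero_smul, add_zero]))
    have hnorm : ‖emb (z - x)‖ = |t| := by
      rw [hwe, norm_smul, hθ, mul_one, Real.norm_eq_abs]
    have hb : ‖emb (z - x)‖ ≤ 2 * r := by
      rw [emb_sub]
      calc ‖emb z - emb x‖ ≤ ‖emb z‖ + ‖emb x‖ := norm_sub_le _ _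
        _ ≤ 2 * r := by linarith
    apply hθρ
    rcases lt_or_gt_of_ne ht0 with htneg | htpos
    · refine ⟨-(z - x), neg_ne_zero.mpr hw0, ?_, ?_⟩
      · have h1 : (1:ℝ) ≤ ((Finset.univ.gcd fun i => ((-(z-x)) i).natAbs : ℕ) : ℝ) :=
          gcd_one_le _ (neg_ne_zero.mpr hw0)
        have h2 : ‖emb (-(z - x))‖ ≤ 2 * r := by rw [emb_neg, norm_neg]; exact hb
        calc ‖emb (-(z-x))‖ / _ ≤ ‖emb (-(z-x))‖ :=
              div_le_self (norm_nonneg _) h1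
          _ ≤ 2 * r := h2
          _ ≤ ρ := le_of_lt hρ
      · have hnn : ‖emb (-(z - x))‖ = -t := by
          rw [emb_neg, norm_neg, hnorm, abs_of_neg htneg]
        rw [hnn, emb_neg, hwe, ← neg_smul, smul_smul,
          inv_mul_cancel₀ (neg_ne_zero.mpr ht0), one_smul]
    · refine ⟨z - x, hw0, ?_, ?_⟩
      · have h1 : (1:ℝ) ≤ ((Finset.univ.gcd fun i => ((z-x) i).natAbs : ℕ) : ℝ) :=
          gcd_one_le _ hw0
        calc ‖emb (z-x)‖ / _ ≤ ‖emb (z-x)‖ := div_le_self (norm_nonneg _) h1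
          _ ≤ 2 * r := hb
          _ ≤ ρ := le_of_lt hρ
      · have hnn : ‖emb (z - x)‖ = t := by rw [hnorm, abs_of_pos htpos]
        rw [hnn, hwe, smul_smul, inv_mul_cancel₀ ht0, one_smul]
  refine ⟨key, ?_⟩
  have hsupp : ∀ z : Fin d → ℤ,
      z ∈ {z | (∃ t : ℝ, emb z = emb x + t • θ) ∧ F z ≠ 1} ↔ (z = x ∧ F x ≠ 1) := by
    intro z
    constructor
    · rintro ⟨hline, hFz⟩
      have hzr : ‖emb z‖ ≤ r := by
        by_contra h
        exact hFz (hF z h)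
      have := key z hzr hline
      exact ⟨this, this ▸ hFz⟩
    · rintro ⟨rfl, hFx⟩
      exact ⟨⟨0, by rw [zero_smul, add_zero]⟩, hFx⟩
  rw [discS, oprodBy]
  by_cases hFx : F x = 1
  · have hex : ∃ l : List (Fin d → ℤ),
        l.Pairwise (fun a b => (∑ i, ((b i : ℝ) - (emb x) i) * θ i) <
          (∑ i, ((a i : ℝ) - (emb x) i) * θ i)) ∧
        ∀ a, a ∈ l ↔ a ∈ {z | (∃ t : ℝ, emb z = emb x + t • θ) ∧ F z ≠ 1} := by
      refine ⟨[], List.Pairwise.nil, fun a => ?_⟩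
      simp only [List.not_mem_nil, false_iff]
      intro ha
      exact ((hsupp a).mp ha).2 hFx
    rw [dif_pos hex]
    obtain ⟨_, hmem⟩ := hex.choose_spec
    have : hex.choose = [] := by
      rw [List.eq_nil_iff_forall_not_mem]
      intro a ha
      exact ((hsupp a).mp ((hmem a).mp ha)).2 hFx
    rw [this]
    simp [hFx]
  · have hex : ∃ l : List (Fin d → ℤ),
        l.Pairwise (fun a b => (∑ i, ((b i : ℝ) - (emb x) i) * θ i) <
          (∑ i, ((a i : ℝ) - (emb x) i) * θ i)) ∧
        ∀ a, a ∈ l ↔ a ∈ {z | (∃ t : ℝ, emb z = emb x + t • θ) ∧ F z ≠ 1} := by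
      refine ⟨[x], by simp, fun a => ?_⟩
      rw [hsupp a]
      simp [hFx]
    rw [dif_pos hex]
    obtain ⟨hpw, hmem⟩ := hex.choose_spec
    have hiff : ∀ a, a ∈ hex.choose ↔ a = x := by
      intro a
      rw [hmem a, hsupp a]
      simp [hFx]
    have hnd : hex.choose.Nodup := by
      refine hpw.imp ?_
      intro a b h
      rintro rfl
      exact lt_irrefl _ h
    have : hex.choose = [x] := by
      cases hl : hex.choose with
      | nil =>
        exact absurd ((hiff x).mpr rfl) (by rw [hl]; simp)
      | cons a t =>
        have ha : a = x := (hiff a).mp (by rw [hl]; exact List.mem_cons_self)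
        have htnil : t = [] := by
          rw [List.eq_nil_iff_forall_not_mem]
          intro b hb
          have hbx : b = x := (hiff b).mp (by rw [hl]; exact List.mem_cons_of_mem _ hb)
          rw [hl] at hnd
          have := (List.nodup_cons.mp hnd).1
          rw [ha] at this
          rw [hbx] at hb
          exact this hb
        rw [ha, htnil]
    rw [this]
    simp
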